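/- arXiv:math/0412011 — 3 statements merged into one kernel-verified Lean document; each statement's English description precedes it below -/
import Mathlib

section
/- Let L be a lattice (discrete subgroup isomorphic to Z^2 of full rank) in the Euclidean plane C = R^2. Then λ₁(L)² ≤ (2/√3) · area(C/L), where λ₁(L) is the least norm of a nonzero vector of L and area(C/L) is the covolume of L. -/
open Complex

namespace HermiteAux

/-- x-component of `m•v + n•w`. -/
noncomputable def lx (v w : ℂ) (m n : ℤ) : ℝ := m * v.re + n * w.re
/-- y-component of `m•v + n•w`. -/
noncomputable def ly (v w : ℂ) (m n : ℤ) : ℝ := m * v.im + n * w.im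
/-- squared norm of `m•v + n•w`. -/
noncomputable def LQ (v w : ℂ) (m n : ℤ) : ℝ := lx v w m n ^ 2 + ly v w m n ^ 2
/-- inner product of lattice vectors. -/
noncomputable def LB (v w : ℂ) (m n p s : ℤ) : ℝ :=
  lx v w m n * lx v w p s + ly v w m n * ly v w p s

lemma norm_sq_eq (v w : ℂ) (m n : ℤ) :
    ‖(m : ℂ) * v + (n : ℂ) * w‖ ^ 2 = LQ v w m n := by
  rw [Complex.sq_norm, Complex.normSq_apply]
  simp [LQ, lx, ly, Complex.add_re, Complex.add_im, Complex.mul_re, Complex.mul_im]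
  ring

lemma lagrange (v w : ℂ) (m n p s : ℤ) :
    LQ v w m n * LQ v w p s =
      LB v w m n p s ^ 2 +
        (((m : ℝ) * s - n * p) * (v.re * w.im - v.im * w.re)) ^ 2 := by
  unfold LQ LB lx ly; ring

lemma bilin (v w : ℂ) (m n p s k : ℤ) :
    LB v w m n (p + k * m) (s + k * n) = LB v w m n p s + k * LQ v w m n := by
  unfold LQ LB lx ly; push_cast; ring

lemma homog (v w : ℂ) (g m n : ℤ) : LQ v w (g * m) (g * n) = (g : ℝ)^2 * LQ v w m n := by
  unfold LQ lx ly; push_cast; ring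

lemma LQ_nonneg (v w : ℂ) (m n : ℤ) : 0 ≤ LQ v w m n := by unfold LQ; positivity

lemma LQ_pos (v w : ℂ) (hvw : LinearIndependent ℝ ![v, w]) {m n : ℤ}
    (h : ¬(m = 0 ∧ n = 0)) : 0 < LQ v w m n := by
  rcases (LQ_nonneg v w m n).lt_or_eq with h' | h'
  · exact h'
  · exfalso
    have h0 : lx v w m n ^ 2 + ly v w m n ^ 2 = 0 := by rw [← LQ, ← h']
    have hx : lx v w m n = 0 ∧ ly v w m n = 0 := by
      constructor <;> [skip; skip] <;>
      · rw [← pow_eq_zero_iff (n := 2) (by norm_num)]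
        nlinarith [sq_nonneg (lx v w m n), sq_nonneg (ly v w m n)]
    have hz : (m : ℝ) • v + (n : ℝ) • w = 0 := by
      apply Complex.ext <;>
        simp [Complex.add_re, Complex.add_im, Complex.smul_re, Complex.smul_im]
      · exact hx.1
      · exact hx.2
    obtain ⟨h1, h2⟩ := LinearIndependent.pair_iff.mp hvw _ _ hz
    exact h ⟨by exact_mod_cast h1, by exact_mod_cast h2⟩

lemma det_ne_zero (v w : ℂ) (hvw : LinearIndependent ℝ ![v, w]) :
    v.re * w.im - v.im * w.re ≠ 0 := by
  intro hd
  have key : ∀ s t : ℝ, s • v + t • w = 0 → s = 0 ∧ t = 0 :=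
    LinearIndependent.pair_iff.mp hvw
  have h1 := key w.im (-v.im) (by
    apply Complex.ext <;>
      simp [Complex.add_re, Complex.add_im, Complex.smul_re, Complex.smul_im] <;> nlinarith)
  have h2 := key w.re (-v.re) (by
    apply Complex.ext <;>
      simp [Complex.add_re, Complex.add_im, Complex.smul_re, Complex.smul_im] <;> nlinarith)
  have hv : v = 0 := by
    apply Complex.ext <;> simp
    · nlinarith [h2.2]
    · nlinarith [h1.2]
  have := key 1 0 (by simp [hv])
  simp at this

end HermiteAux

open HermiteAux

/-- Hermite/Loewner bound in dimension 2: for a lattice `L ⊂ ℂ` spanned by two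
`ℝ`-linearly independent vectors `v, w`, the least norm `λ₁(L)` of a nonzero lattice
vector satisfies `λ₁(L)² ≤ (2/√3) · area(ℂ/L)`. -/
theorem hermite_bound_dim_two (v w : ℂ) (hvw : LinearIndependent ℝ ![v, w]) :
    (sInf {r : ℝ | ∃ m n : ℤ, (m : ℂ) * v + (n : ℂ) * w ≠ 0 ∧
        ‖(m : ℂ) * v + (n : ℂ) * w‖ = r}) ^ 2 ≤
      (2 / Real.sqrt 3) * |v.re * w.im - v.im * w.re| := by
  set d : ℝ := v.re * w.im - v.im * w.re with hd_def
  clear_value d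
  have hd : d ≠ 0 := hd_def ▸ det_ne_zero v w hvw
  have hd2 : 0 < d ^ 2 := by positivity
  set A : ℝ := LQ v w 1 0 with hA_def
  set Bw : ℝ := LQ v w 0 1 with hB_def
  clear_value A Bw
  have hApos : 0 < A := by rw [hA_def]; exact LQ_pos v w hvw (by simp)
  have hBpos : 0 < Bw := by rw [hB_def]; exact LQ_pos v w hvw (by simp)
  -- bound: any (m,n) with LQ ≤ A has |m|,|n| ≤ N
  set C₀ : ℝ := A * max A Bw / d ^ 2 with hC_def
  set N : ℤ := max 1 ⌊C₀⌋ with hN_def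
  clear_value C₀ N
  have bound : ∀ m n : ℤ, LQ v w m n ≤ A → |m| ≤ N ∧ |n| ≤ N := by
    intro m n hmn
    have habs : ∀ x : ℤ, (x : ℝ)^2 ≤ C₀ → |x| ≤ N := by
      intro x hx
      have h1 : |x| ≤ x ^ 2 := by
        rcases eq_or_ne x 0 with rfl | hx0
        · simp
        · calc |x| = |x| * 1 := (mul_one _).symm
            _ ≤ |x| * |x| := by
              have := Int.one_le_abs hx0
              exact mul_le_mul_of_nonneg_left this (abs_nonneg x)
            _ = x ^ 2 := by rw [← abs_mul, ← sq, abs_sq]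
      have h2 : ((|x| : ℤ) : ℝ) ≤ C₀ := by
        calc ((|x| : ℤ) : ℝ) ≤ ((x : ℝ))^2 := by push_cast; exact_mod_cast h1
          _ ≤ C₀ := hx
      have : |x| ≤ ⌊C₀⌋ := Int.le_floor.mpr h2
      rw [hN_def]
      exact this.trans (le_max_right _ _)
    constructor
    · apply habs
      have := lagrange v w m n 0 1
      rw [← hB_def, ← hd_def] at this
      push_cast at this
      have hle : ((m:ℝ))^2 * d^2 ≤ LQ v w m n * Bw := by
        nlinarith [sq_nonneg (LB v w m n 0 1)]
      rw [hC_def, le_div_iff₀ hd2]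
      have : LQ v w m n * Bw ≤ A * max A Bw :=
        mul_le_mul hmn (le_max_right _ _) hBpos.le hApos.le
      nlinarith
    · apply habs
      have := lagrange v w m n 1 0
      rw [← hA_def, ← hd_def] at this
      push_cast at this
      have hle : ((n:ℝ))^2 * d^2 ≤ LQ v w m n * A := by
        nlinarith [sq_nonneg (LB v w m n 1 0)]
      rw [hC_def, le_div_iff₀ hd2]
      have : LQ v w m n * A ≤ A * max A Bw :=
        mul_le_mul hmn (le_max_left _ _) hApos.le hApos.le
      nlinarith
  -- the finite search box
  set F : Finset (ℤ × ℤ) :=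
    (Finset.Icc (-N) N ×ˢ Finset.Icc (-N) N).filter (fun p => ¬(p.1 = 0 ∧ p.2 = 0)) with hF_def
  have hN1 : (1 : ℤ) ≤ N := by rw [hN_def]; exact le_max_left _ _
  have h10F : ((1 : ℤ), (0 : ℤ)) ∈ F := by
    refine Finset.mem_filter.mpr ⟨Finset.mem_product.mpr
      ⟨Finset.mem_Icc.mpr ⟨by omega, hN1⟩, Finset.mem_Icc.mpr ⟨by omega, by omega⟩⟩, by simp⟩
  obtain ⟨⟨m₀, n₀⟩, hmem, hmin⟩ :=
    F.exists_min_image (fun p => LQ v w p.1 p.2) ⟨(1, 0), h10F⟩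
  have hm₀ne : ¬(m₀ = 0 ∧ n₀ = 0) := by
    have := Finset.mem_filter.mp hmem
    exact this.2
  set μ : ℝ := LQ v w m₀ n₀ with hμ_def
  clear_value μ
  have hμpos : 0 < μ := by rw [hμ_def]; exact LQ_pos v w hvw hm₀ne
  have hμA : μ ≤ A := by rw [hA_def]; exact hmin (1, 0) h10F
  -- global minimality
  have hglob : ∀ m n : ℤ, ¬(m = 0 ∧ n = 0) → μ ≤ LQ v w m n := by
    intro m n hmn
    rcases le_or_gt (LQ v w m n) A with h | h
    · obtain ⟨h1, h2⟩ := bound m n h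
      have : (m, n) ∈ F := by
        refine Finset.mem_filter.mpr ⟨Finset.mem_product.mpr
          ⟨Finset.mem_Icc.mpr (abs_le.mp h1), Finset.mem_Icc.mpr (abs_le.mp h2)⟩, hmn⟩
      exact hmin (m, n) this
    · exact hμA.trans h.le
  -- gcd m₀ n₀ = 1
  have hgcd : Int.gcd m₀ n₀ = 1 := by
    set g : ℤ := (Int.gcd m₀ n₀ : ℤ) with hg_def
    have hgne : Int.gcd m₀ n₀ ≠ 0 := fun h => hm₀ne (Int.gcd_eq_zero_iff.mp h)
    have hgpos : 0 < g := by
      rw [hg_def]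
      exact_mod_cast Nat.pos_of_ne_zero hgne
    obtain ⟨m₁, hm₁⟩ := (Int.gcd_dvd_left m₀ n₀ : (↑(Int.gcd m₀ n₀) : ℤ) ∣ m₀)
    obtain ⟨n₁, hn₁⟩ := (Int.gcd_dvd_right m₀ n₀ : (↑(Int.gcd m₀ n₀) : ℤ) ∣ n₀)
    have hne1 : ¬(m₁ = 0 ∧ n₁ = 0) := by
      rintro ⟨rfl, rfl⟩
      simp at hm₁ hn₁
      exact hm₀ne ⟨hm₁, hn₁⟩
    have h1 : μ ≤ LQ v w m₁ n₁ := hglob m₁ n₁ hne1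
    rw [← hg_def] at hm₁ hn₁
    have h2 : μ = (g : ℝ)^2 * LQ v w m₁ n₁ := by
      rw [hμ_def, hm₁, hn₁, homog]
    have hL1 : 0 < LQ v w m₁ n₁ := LQ_pos v w hvw hne1
    have hg1 : (g : ℝ) ≤ 1 := by nlinarith [hμpos, sq_nonneg ((g:ℝ) - 1)]
    have hgle : g ≤ 1 := by exact_mod_cast hg1
    have : (Int.gcd m₀ n₀ : ℤ) = 1 := by rw [← hg_def]; omega
    exact_mod_cast this
  -- Bezout
  have hbez : m₀ * Int.gcdA m₀ n₀ + n₀ * Int.gcdB m₀ n₀ = 1 := by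
    have := Int.gcd_eq_gcd_ab m₀ n₀
    rw [hgcd] at this; exact_mod_cast this.symm
  set p : ℤ := -Int.gcdB m₀ n₀ with hp_def
  set q : ℤ := Int.gcdA m₀ n₀ with hq_def
  clear_value p q
  have hdet1 : m₀ * q - n₀ * p = 1 := by rw [hp_def]; linear_combination hbez
  -- reduction step
  set k : ℤ := round (-(LB v w m₀ n₀ p q) / μ) with hk_def
  clear_value k
  set p' : ℤ := p + k * m₀ with hp'_def
  set q' : ℤ := q + k * n₀ with hq'_def
  clear_value p' q'
  have hdet1' : m₀ * q' - n₀ * p' = 1 := by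
    rw [hp'_def, hq'_def]; linear_combination hdet1
  have hp'ne : ¬(p' = 0 ∧ q' = 0) := by rintro ⟨h1, h2⟩; rw [h1, h2] at hdet1'; simp at hdet1'
  have hB2 : |LB v w m₀ n₀ p' q'| ≤ μ / 2 := by
    have hb := bilin v w m₀ n₀ p q k
    rw [← hp'_def, ← hq'_def, ← hμ_def] at hb
    have hr := abs_sub_round (-(LB v w m₀ n₀ p q) / μ)
    rw [← hk_def] at hr
    have : LB v w m₀ n₀ p' q' = μ * (-((-(LB v w m₀ n₀ p q)) / μ - k)) := by
      rw [hb]; field_simp; ring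
    rw [this, abs_mul, abs_of_pos hμpos, abs_neg]
    calc μ * |(-(LB v w m₀ n₀ p q)) / μ - ↑k| ≤ μ * (1/2) :=
          mul_le_mul_of_nonneg_left hr hμpos.le
      _ = μ / 2 := by ring
  have hC' : μ ≤ LQ v w p' q' := hglob p' q' hp'ne
  have hlag := lagrange v w m₀ n₀ p' q'
  have hdetcast : ((m₀ : ℝ) * q' - n₀ * p') = 1 := by exact_mod_cast hdet1'
  rw [hdetcast, ← hd_def, ← hμ_def] at hlag
  have hlag' : μ * LQ v w p' q' = LB v w m₀ n₀ p' q' ^ 2 + d ^ 2 := by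
    rw [hlag]; ring
  -- μ² ≤ (4/3) d²
  have hmain : 3 * μ ^ 2 ≤ 4 * d ^ 2 := by
    have h1 : μ * μ ≤ μ * LQ v w p' q' := mul_le_mul_of_nonneg_left hC' hμpos.le
    have h2 : LB v w m₀ n₀ p' q' ^ 2 ≤ (μ / 2) ^ 2 := by
      rw [← _root_.sq_abs]
      exact pow_le_pow_left₀ (abs_nonneg _) hB2 2
    nlinarith [hlag']
  have hs3 : (0:ℝ) < Real.sqrt 3 := Real.sqrt_pos.mpr (by norm_num)
  have hs3sq : Real.sqrt 3 ^ 2 = 3 := Real.sq_sqrt (by norm_num)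
  have hfinal : μ ≤ (2 / Real.sqrt 3) * |d| := by
    rw [div_mul_eq_mul_div, le_div_iff₀ hs3]
    nlinarith [_root_.sq_abs d, abs_nonneg d, sq_nonneg (2 * |d| - Real.sqrt 3 * μ), hμpos]
  -- conclude via sInf
  set S : Set ℝ := {r : ℝ | ∃ m n : ℤ, (m : ℂ) * v + (n : ℂ) * w ≠ 0 ∧
      ‖(m : ℂ) * v + (n : ℂ) * w‖ = r} with hS_def
  have hx₀ne : (m₀ : ℂ) * v + (n₀ : ℂ) * w ≠ 0 := by
    intro h
    have : μ = 0 := by rw [hμ_def, ← norm_sq_eq, h]; simp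
    exact hμpos.ne' this
  have hmemS : ‖(m₀ : ℂ) * v + (n₀ : ℂ) * w‖ ∈ S := ⟨m₀, n₀, hx₀ne, rfl⟩
  have hbdd : BddBelow S := ⟨0, fun r ⟨m, n, _, hr⟩ => hr ▸ norm_nonneg _⟩
  have hinf_le : sInf S ≤ ‖(m₀ : ℂ) * v + (n₀ : ℂ) * w‖ := csInf_le hbdd hmemS
  have hinf_nonneg : 0 ≤ sInf S :=
    le_csInf ⟨_, hmemS⟩ (fun r ⟨m, n, _, hr⟩ => hr ▸ norm_nonneg _)
  calc sInf S ^ 2 ≤ ‖(m₀ : ℂ) * v + (n₀ : ℂ) * w‖ ^ 2 :=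
        pow_le_pow_left₀ hinf_nonneg hinf_le 2
    _ = μ := (norm_sq_eq v w m₀ n₀).trans hμ_def.symm
    _ ≤ (2 / Real.sqrt 3) * |d| := hfinal
end

section
/- Let L ⊂ C be a lattice such that λ₁(L)² = (2/√3) · area(C/L). Then there exists a nonzero complex number z such that z·L equals the lattice spanned by 1 and e^{iπ/3} (the Eisenstein lattice generated by sixth roots of unity). -/
open Complex

private lemma exists_min_norm (v w : ℂ) (hvw : LinearIndependent ℝ ![v, w])
    (S : Set ℂ) (hS : ∀ x ∈ S, ∃ m n : ℤ, x = (m : ℂ) * v + (n : ℂ) * w)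
    (hne : S.Nonempty) :
    ∃ a ∈ S, ∀ x ∈ S, ‖a‖ ≤ ‖x‖ := by
  classical
  obtain ⟨x0, hx0⟩ := hne
  have hcard : Fintype.card (Fin 2) = Module.finrank ℝ ℂ := by
    simp [Complex.finrank_real_complex]
  set b : Module.Basis (Fin 2) ℝ ℂ := basisOfLinearIndependentOfCardEqFinrank hvw hcard with hb
  have hrange : Set.range ⇑b = {v, w} := by
    rw [hb, coe_basisOfLinearIndependentOfCardEqFinrank]
    ext x
    constructor
    · rintro ⟨i, rfl⟩
      fin_cases i <;> simp
    · rintro (rfl | rfl)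
      · exact ⟨0, rfl⟩
      · exact ⟨1, rfl⟩
  have hdisc : DiscreteTopology (Submodule.span ℤ ({v, w} : Set ℂ)) := by
    rw [← hrange]; infer_instance
  have hdiscSet : DiscreteTopology ((Submodule.span ℤ ({v, w} : Set ℂ) : Set ℂ)) := hdisc
  have hclosed : IsClosed ((Submodule.span ℤ ({v, w} : Set ℂ) : Set ℂ)) := by
    have : DiscreteTopology ((Submodule.span ℤ ({v, w} : Set ℂ)).toAddSubgroup) := hdisc
    exact AddSubgroup.isClosed_of_discrete
      (H := (Submodule.span ℤ ({v, w} : Set ℂ)).toAddSubgroup)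
  have hSL : S ⊆ (Submodule.span ℤ ({v, w} : Set ℂ) : Set ℂ) := by
    intro x hx
    obtain ⟨m, n, rfl⟩ := hS x hx
    exact Submodule.mem_span_pair.mpr ⟨m, n, by push_cast [zsmul_eq_mul]; ring⟩
  have hfin : ((Submodule.span ℤ ({v, w} : Set ℂ) : Set ℂ) ∩
      Metric.closedBall 0 ‖x0‖).Finite := by
    have hK : IsCompact ((Submodule.span ℤ ({v, w} : Set ℂ) : Set ℂ) ∩
        Metric.closedBall 0 ‖x0‖) :=
      (isCompact_closedBall (0 : ℂ) ‖x0‖).inter_left hclosed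
    exact hK.finite (isDiscrete_iff_discreteTopology.mpr (DiscreteTopology.of_subset hdiscSet Set.inter_subset_left))
  have hTfin : (S ∩ Metric.closedBall 0 ‖x0‖).Finite :=
    hfin.subset (Set.inter_subset_inter_left _ hSL)
  obtain ⟨a, ⟨haS, _⟩, hmin⟩ := Set.exists_min_image _ norm hTfin
    ⟨x0, hx0, (by simp [Metric.mem_closedBall, dist_zero_right])⟩
  refine ⟨a, haS, fun x hx => ?_⟩
  rcases le_or_gt ‖x‖ ‖x0‖ with h | h
  · exact hmin x ⟨hx, by simpa [Metric.mem_closedBall, dist_zero_right] using h⟩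
  · exact le_trans (hmin x0 ⟨hx0, (by simp [Metric.mem_closedBall, dist_zero_right])⟩) h.le


private lemma reduction_aux {A B P s t : ℝ} (hA0 : 0 < A) (hB0 : 0 < B) (hAB : A ≤ B)
    (hPu : 2*P ≤ A) (hPl : -A ≤ 2*P) (hs2 : s^2 ≤ 1/4) (ht2 : t^2 ≤ 1/4)
    (hBle : B ≤ s^2*A + 2*s*t*P + t^2*B) : False := by
  rcases le_or_gt 0 (s*t) with hst | hst
  · have hm := mul_le_mul_of_nonneg_left hPu hst
    nlinarith [sq_nonneg (s - t)]
  · have hm := mul_le_mul_of_nonpos_left hPl hst.le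
    nlinarith [sq_nonneg (s + t)]

private lemma det_unit_aux {d D : ℝ} {M K : ℤ} (hd : d ≠ 0) (h1 : D = (M:ℝ) * d)
    (h2 : d = (K:ℝ) * D) : M = 1 ∨ M = -1 := by
  have h3 : ((M * K : ℤ) : ℝ) * d = 1 * d := by
    push_cast
    rw [h1] at h2
    linear_combination -h2
  have h4 : (M * K : ℤ) = 1 := by exact_mod_cast mul_right_cancel₀ hd h3
  exact Int.isUnit_iff.mp (IsUnit.of_mul_eq_one _ h4)

private lemma eis_numeric_aux {A B P Dab Δ s3 : ℝ} (hA0 : 0 < A) (hAB : A ≤ B)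
    (hPu : 2*P ≤ A) (hPl : -A ≤ 2*P) (hLagrange : A*B = P^2 + Dab^2)
    (habs : |Dab| = Δ) (hs3sq : s3^2 = 3) (hAeq : s3 * A = 2 * Δ) :
    (P = A/2 ∨ P = -(A/2)) ∧ (Dab = s3/2 * A ∨ Dab = -(s3/2*A)) := by
  have hΔ2 : Dab^2 = Δ^2 := by rw [← habs, _root_.sq_abs]
  have h3 : (s3*A)^2 = (2*Δ)^2 := by rw [hAeq]
  rw [mul_pow, hs3sq] at h3
  have hDabsq : Dab^2 = 3/4 * A^2 := by nlinarith
  have hBA : B = A := by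
    refine le_antisymm ?_ hAB
    have hprod : 0 ≤ (A - 2*P) * (A + 2*P) := mul_nonneg (by linarith) (by linarith)
    nlinarith
  have hPsq : P^2 = A^2/4 := by
    rw [hBA] at hLagrange
    nlinarith
  constructor
  · have h0 : (P - A/2) * (P + A/2) = 0 := by linear_combination hPsq
    rcases mul_eq_zero.mp h0 with h | h
    · left; linarith
    · right; linarith
  · have h0 : (Dab - s3/2 * A) * (Dab + s3/2 * A) = 0 := by
      linear_combination hDabsq - (A^2/4) * hs3sq
    rcases mul_eq_zero.mp h0 with h | h
    · left; linarith
    · right; linarith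

set_option maxHeartbeats 2000000 in
/-- Equality case of the Hermite bound in dimension 2: a lattice `L ⊂ ℂ` with
`λ₁(L)² = (2/√3) · area(ℂ/L)` is homothetic to the Eisenstein lattice spanned by
`1` and `e^{iπ/3}`. -/
theorem hermite_equality_dim_two (v w : ℂ) (hvw : LinearIndependent ℝ ![v, w])
    (heq : (sInf {r : ℝ | ∃ m n : ℤ, (m : ℂ) * v + (n : ℂ) * w ≠ 0 ∧
        ‖(m : ℂ) * v + (n : ℂ) * w‖ = r}) ^ 2 =
      (2 / Real.sqrt 3) * |v.re * w.im - v.im * w.re|) :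
    ∃ z : ℂ, z ≠ 0 ∧
      {x : ℂ | ∃ m n : ℤ, x = z * ((m : ℂ) * v + (n : ℂ) * w)} =
      {x : ℂ | ∃ m n : ℤ, x = (m : ℂ) * 1 + (n : ℂ) * Complex.exp (Real.pi * I / 3)} := by
  classical
  have hpair := LinearIndependent.pair_iff.mp hvw
  have hv0 : v ≠ 0 := by
    intro h
    have := hpair 1 0 (by simp [h])
    simp at this
  -- the lattice as a set
  set L : Set ℂ := {x : ℂ | ∃ m n : ℤ, x = (m : ℂ) * v + (n : ℂ) * w} with hLdef
  have hvL : v ∈ L := ⟨1, 0, by push_cast; ring⟩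
  have hwL : w ∈ L := ⟨0, 1, by push_cast; ring⟩
  have hcomb : ∀ (m n : ℤ) (x y : ℂ), x ∈ L → y ∈ L → (m : ℂ) * x + (n : ℂ) * y ∈ L := by
    rintro m n x y ⟨p, q, rfl⟩ ⟨r, s, rfl⟩
    exact ⟨m * p + n * r, m * q + n * s, by push_cast; ring⟩
  -- the determinant is nonzero
  have hd0 : v.re * w.im - v.im * w.re ≠ 0 := by
    intro h
    rcases eq_or_ne v.re 0 with h1 | h1
    · rcases eq_or_ne v.im 0 with h2 | h2
      · exact hv0 (Complex.ext h1 h2)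
      · have key : (w.im : ℝ) • v + (-v.im : ℝ) • w = 0 := by
          apply Complex.ext <;>
            simp [Complex.real_smul, Complex.add_re, Complex.add_im, Complex.mul_re,
              Complex.mul_im] <;> nlinarith [h]
        have := (hpair _ _ key).2
        simp at this
        exact h2 this
    · have key : (w.re : ℝ) • v + (-v.re : ℝ) • w = 0 := by
        apply Complex.ext <;>
          simp [Complex.real_smul, Complex.add_re, Complex.add_im, Complex.mul_re,
            Complex.mul_im] <;> nlinarith [h]
      have := (hpair _ _ key).2
      simp at this
      exact h1 this
  set Δ : ℝ := |v.re * w.im - v.im * w.re| with hΔdef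
  have hΔ0 : 0 < Δ := abs_pos.mpr hd0
  set lam : ℝ := sInf {r : ℝ | ∃ m n : ℤ, (m : ℂ) * v + (n : ℂ) * w ≠ 0 ∧
      ‖(m : ℂ) * v + (n : ℂ) * w‖ = r} with hlamdef
  have hs3 : (0:ℝ) < Real.sqrt 3 := Real.sqrt_pos.mpr (by norm_num)
  have hs3sq : Real.sqrt 3 ^ 2 = 3 := Real.sq_sqrt (by norm_num)
  have hlamsq : lam ^ 2 = (2 / Real.sqrt 3) * Δ := heq
  have hlampos : 0 < lam := by
    have h1 : 0 < lam ^ 2 := by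
      rw [hlamsq]; positivity
    have h2 : 0 ≤ lam := by
      apply Real.sInf_nonneg
      rintro r ⟨m, n, _, hr⟩
      exact hr ▸ norm_nonneg _
    nlinarith
  -- shortest nonzero vector a
  obtain ⟨a, ⟨haL, ha0⟩, hamin⟩ := exists_min_norm v w hvw (L \ {0})
    (fun x hx => hx.1) ⟨v, hvL, hv0⟩
  have ha0' : a ≠ 0 := ha0
  have hlam_a : lam = ‖a‖ := by
    obtain ⟨ma, na, haeq⟩ := haL
    apply le_antisymm
    · apply csInf_le
      · exact ⟨0, by rintro r ⟨m, n, _, hr⟩; exact hr ▸ norm_nonneg _⟩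
      · exact ⟨ma, na, haeq ▸ ha0', by rw [← haeq]⟩
    · apply le_csInf
      · exact ⟨‖a‖, ma, na, haeq ▸ ha0', by rw [← haeq]⟩
      · rintro r ⟨m, n, hne, hr⟩
        exact hr ▸ hamin _ ⟨⟨m, n, rfl⟩, hne⟩
  -- second minimum b : shortest vector not on the real line through a
  have hS2ne : ({x : ℂ | x ∈ L ∧ ∀ t : ℝ, x ≠ (t : ℂ) * a}).Nonempty := by
    rw [Set.nonempty_iff_ne_empty]
    intro hcon
    have hcon' : ∀ x : ℂ, x ∈ L → ¬ (∀ t : ℝ, x ≠ (t : ℂ) * a) := by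
      intro x hx hall
      have : x ∈ ({x : ℂ | x ∈ L ∧ ∀ t : ℝ, x ≠ (t : ℂ) * a}) := ⟨hx, hall⟩
      rw [hcon] at this
      exact this
    obtain ⟨s, hs⟩ := not_forall.mp (hcon' v hvL)
    obtain ⟨t, ht⟩ := not_forall.mp (hcon' w hwL)
    push_neg at hs ht
    have key : (t : ℝ) • v + (-s : ℝ) • w = 0 := by
      rw [Complex.real_smul, Complex.real_smul, hs, ht]
      push_cast; ring
    have h1 := (hpair _ _ key).1
    have h2 := (hpair _ _ key).2
    simp at h1 h2
    subst h1 h2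
    simp at hs
    exact hv0 hs
  obtain ⟨b, ⟨hbL, hbna⟩, hbmin⟩ := exists_min_norm v w hvw
    {x : ℂ | x ∈ L ∧ ∀ t : ℝ, x ≠ (t : ℂ) * a} (fun x hx => hx.1) hS2ne
  have hb0' : b ≠ 0 := fun h => hbna 0 (by simp [h])
  set A : ℝ := Complex.normSq a with hAdef
  set B : ℝ := Complex.normSq b with hBdef
  set P : ℝ := a.re * b.re + a.im * b.im with hPdef
  set Dab : ℝ := a.re * b.im - a.im * b.re with hDdef
  have hA0 : 0 < A := Complex.normSq_pos.mpr ha0'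
  have hB0 : 0 < B := Complex.normSq_pos.mpr hb0'
  have hnormsq : ∀ z : ℂ, ‖z‖ ^ 2 = Complex.normSq z := fun z => by
    rw [Complex.sq_norm]
  have hnorm_le : ∀ x y : ℂ, ‖x‖ ≤ ‖y‖ → Complex.normSq x ≤ Complex.normSq y := by
    intro x y h
    have hx := hnormsq x
    have hy := hnormsq y
    nlinarith [norm_nonneg x, norm_nonneg y]
  have hAlam : A = lam ^ 2 := by rw [hlam_a, hnormsq]
  have hAB : A ≤ B := by
    have h := hnorm_le _ _ (hamin b ⟨hbL, hb0'⟩)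
    rw [← hAdef, ← hBdef] at h
    exact h
  have hnsq_comb : ∀ s t : ℝ, Complex.normSq ((s:ℂ)*a + (t:ℂ)*b)
      = s^2*A + 2*s*t*P + t^2*B := by
    intro s t
    rw [hAdef, hBdef, hPdef]
    simp only [Complex.normSq_apply, Complex.add_re, Complex.add_im, Complex.mul_re,
      Complex.mul_im, Complex.ofReal_re, Complex.ofReal_im]
    ring
  have hPu : 2 * P ≤ A := by
    have h1 : b - a ∈ L := by
      have := hcomb 1 (-1) b a hbL haL
      have he : b - a = ((1:ℤ):ℂ)*b + ((-1:ℤ):ℂ)*a := by push_cast; ring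
      rw [he]; exact this
    have h2 : ∀ t : ℝ, b - a ≠ (t:ℂ)*a := fun t h =>
      hbna (t + 1) (by push_cast; linear_combination h)
    have h3 := hnorm_le _ _ (hbmin (b - a) ⟨h1, h2⟩)
    have h4 : b - a = ((-1:ℝ):ℂ)*a + ((1:ℝ):ℂ)*b := by push_cast; ring
    rw [h4, hnsq_comb, ← hBdef] at h3
    nlinarith [h3]
  have hPl : -A ≤ 2 * P := by
    have h1 : b + a ∈ L := by
      have := hcomb 1 1 b a hbL haL
      have he : b + a = ((1:ℤ):ℂ)*b + ((1:ℤ):ℂ)*a := by push_cast; ring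
      rw [he]; exact this
    have h2 : ∀ t : ℝ, b + a ≠ (t:ℂ)*a := fun t h =>
      hbna (t - 1) (by push_cast; linear_combination h)
    have h3 := hnorm_le _ _ (hbmin (b + a) ⟨h1, h2⟩)
    have h4 : b + a = ((1:ℝ):ℂ)*a + ((1:ℝ):ℂ)*b := by push_cast; ring
    rw [h4, hnsq_comb, ← hBdef] at h3
    nlinarith [h3]
  have hLagrange : A * B = P^2 + Dab^2 := by
    rw [hAdef, hBdef, hPdef, hDdef]
    simp only [Complex.normSq_apply]
    ring
  have hDab0 : Dab ≠ 0 := by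
    intro h
    apply hbna (P / A)
    rw [hDdef] at h
    have hA0' : a.re * a.re + a.im * a.im ≠ 0 := by
      rw [hAdef, Complex.normSq_apply] at hA0
      exact hA0.ne'
    apply Complex.ext
    · simp only [Complex.mul_re, Complex.ofReal_re, Complex.ofReal_im, hPdef, hAdef,
        Complex.normSq_apply]
      rw [zero_mul, sub_zero, div_mul_eq_mul_div, eq_div_iff hA0']
      linear_combination (-a.im) * h
    · simp only [Complex.mul_im, Complex.ofReal_re, Complex.ofReal_im, hPdef, hAdef,
        Complex.normSq_apply]
      rw [zero_mul, add_zero, div_mul_eq_mul_div, eq_div_iff hA0']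
      linear_combination a.re * h
  have hInt : ∀ α : ℝ, (α : ℂ) * a ∈ L → ∃ k : ℤ, α = (k : ℝ) := by
    intro α hα
    refine ⟨round α, ?_⟩
    by_contra hne
    have hs : α - (round α : ℝ) ≠ 0 := sub_ne_zero.mpr hne
    have hsA : ((α - (round α : ℝ) : ℝ) : ℂ) * a ∈ L := by
      have h1 := hcomb 1 (-(round α)) ((α:ℂ)*a) a hα haL
      have he : ((α - (round α : ℝ) : ℝ) : ℂ) * a
          = ((1:ℤ):ℂ) * ((α:ℂ)*a) + ((-(round α):ℤ):ℂ) * a := by push_cast; ring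
      rw [he]; exact h1
    have hs0 : ((α - (round α : ℝ) : ℝ) : ℂ) * a ≠ 0 :=
      mul_ne_zero (by exact_mod_cast hs) ha0'
    have h1 := hamin _ ⟨hsA, hs0⟩
    have h2 : |α - (round α : ℝ)| ≤ 1/2 := abs_sub_round α
    have h3 : ‖((α - (round α : ℝ) : ℝ) : ℂ) * a‖ = |α - (round α : ℝ)| * ‖a‖ := by
      rw [norm_mul, Complex.norm_real, Real.norm_eq_abs]
    have h4 : 0 < ‖a‖ := norm_pos_iff.mpr ha0'
    rw [h3] at h1
    nlinarith [abs_nonneg (α - (round α : ℝ))]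
  have hgen : ∀ x ∈ L, ∃ m n : ℤ, x = (m:ℂ) * a + (n:ℂ) * b := by
    intro x hx
    have hD' : a.re * b.im - a.im * b.re ≠ 0 := by rw [← hDdef]; exact hDab0
    obtain ⟨α, hαdef⟩ : ∃ α : ℝ, α = (x.re * b.im - x.im * b.re) / (a.re * b.im - a.im * b.re) :=
      ⟨_, rfl⟩
    obtain ⟨β, hβdef⟩ : ∃ β : ℝ, β = (a.re * x.im - a.im * x.re) / (a.re * b.im - a.im * b.re) :=
      ⟨_, rfl⟩
    have hxeq : x = (α:ℂ) * a + (β:ℂ) * b := by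
      apply Complex.ext
      · simp only [hαdef, hβdef, Complex.add_re, Complex.mul_re,
          Complex.ofReal_re, Complex.ofReal_im]
        simp only [zero_mul, sub_zero]
        rw [div_mul_eq_mul_div, div_mul_eq_mul_div, ← add_div, eq_div_iff hD']
        ring
      · simp only [hαdef, hβdef, Complex.add_im, Complex.mul_im,
          Complex.ofReal_re, Complex.ofReal_im]
        simp only [zero_mul, add_zero]
        rw [div_mul_eq_mul_div, div_mul_eq_mul_div, ← add_div, eq_div_iff hD']
        ring
    obtain ⟨k, hkdef⟩ : ∃ k : ℤ, k = round β := ⟨_, rfl⟩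
    obtain ⟨t, htdef⟩ : ∃ t : ℝ, t = β - (k:ℝ) := ⟨_, rfl⟩
    have ht : |t| ≤ 1/2 := by rw [htdef, hkdef]; exact abs_sub_round β
    obtain ⟨j, hjdef⟩ : ∃ j : ℤ, j = round α := ⟨_, rfl⟩
    obtain ⟨s, hsdef⟩ : ∃ s : ℝ, s = α - (j:ℝ) := ⟨_, rfl⟩
    have hsb : |s| ≤ 1/2 := by rw [hsdef, hjdef]; exact abs_sub_round α
    have htzero : t = 0 := by
      by_contra ht0
      have hzL : (s:ℂ)*a + (t:ℂ)*b ∈ L := by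
        have h1 := hcomb 1 (-k) x b hx hbL
        have h2 := hcomb 1 (-j) (((1:ℤ):ℂ)*x + ((-k:ℤ):ℂ)*b) a h1 haL
        have he : (s:ℂ)*a + (t:ℂ)*b
            = ((1:ℤ):ℂ) * (((1:ℤ):ℂ)*x + ((-k:ℤ):ℂ)*b) + ((-j:ℤ):ℂ)*a := by
          rw [hsdef, htdef, hxeq]; push_cast; ring
        rw [he]; exact h2
      have hznR : ∀ c : ℝ, (s:ℂ)*a + (t:ℂ)*b ≠ (c:ℂ)*a := by
        intro c hc
        have ht0' : (t:ℂ) ≠ 0 := by exact_mod_cast ht0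
        apply hbna ((c - s)/t)
        push_cast
        field_simp
        linear_combination hc
      have hBle : B ≤ s^2*A + 2*s*t*P + t^2*B := by
        have h := hnorm_le _ _ (hbmin _ ⟨hzL, hznR⟩)
        rw [hnsq_comb, ← hBdef] at h
        exact h
      have hs2 : s^2 ≤ 1/4 := by
        calc s^2 = |s|^2 := (_root_.sq_abs s).symm
        _ ≤ (1/2)^2 := pow_le_pow_left₀ (abs_nonneg s) hsb 2
        _ = 1/4 := by norm_num
      have ht2 : t^2 ≤ 1/4 := by
        calc t^2 = |t|^2 := (_root_.sq_abs t).symm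
        _ ≤ (1/2)^2 := pow_le_pow_left₀ (abs_nonneg t) ht 2
        _ = 1/4 := by norm_num
      exact reduction_aux hA0 hB0 hAB hPu hPl hs2 ht2 hBle
    have hβk : β = (k:ℝ) := by rw [← sub_eq_zero, ← htdef]; exact htzero
    have hαa : (α:ℂ)*a ∈ L := by
      have h1 := hcomb 1 (-k) x b hx hbL
      have he : (α:ℂ)*a = ((1:ℤ):ℂ)*x + ((-k:ℤ):ℂ)*b := by
        rw [hxeq, hβk]; push_cast; ring
      rw [he]; exact h1
    obtain ⟨m, hm⟩ := hInt α hαa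
    exact ⟨m, k, by rw [hxeq, hβk, hm]; push_cast; ring⟩
  -- determinant invariance under change of basis
  obtain ⟨p, q, hab1⟩ := haL
  obtain ⟨r, s0, hab2⟩ := hbL
  obtain ⟨p', q', hv'⟩ := hgen v hvL
  obtain ⟨r', s', hw'⟩ := hgen w hwL
  have hDab_d : Dab = ((p * s0 - q * r : ℤ) : ℝ) * (v.re * w.im - v.im * w.re) := by
    rw [hDdef, hab1, hab2]
    simp only [Complex.add_re, Complex.add_im, Complex.mul_re, Complex.mul_im,
      Complex.intCast_re, Complex.intCast_im]
    push_cast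
    ring
  have hd_Dab : v.re * w.im - v.im * w.re = ((p' * s' - q' * r' : ℤ) : ℝ) * Dab := by
    rw [hDdef]
    rw [hv', hw']
    simp only [Complex.add_re, Complex.add_im, Complex.mul_re, Complex.mul_im,
      Complex.intCast_re, Complex.intCast_im]
    push_cast
    ring
  have hM : p * s0 - q * r = 1 ∨ p * s0 - q * r = -1 :=
    det_unit_aux hd0 hDab_d hd_Dab
  have habs : |Dab| = Δ := by
    rw [hΔdef, hDab_d, abs_mul]
    rcases hM with h | h <;> rw [h] <;> simp
  -- numeric consequences of the equality hypothesis
  have hAeq : Real.sqrt 3 * A = 2 * Δ := by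
    rw [hAlam, hlamsq,
      show Real.sqrt 3 * (2 / Real.sqrt 3 * Δ) = (Real.sqrt 3 / Real.sqrt 3) * (2 * Δ) by ring,
      div_self hs3.ne', one_mul]
  obtain ⟨hPcases, hDcases⟩ := eis_numeric_aux hA0 hAB hPu hPl hLagrange habs hs3sq hAeq
  -- the ratio b / a
  have hτre : (b/a).re = P/A := by
    rw [Complex.div_re, hPdef, hAdef]
    ring
  have hτim : (b/a).im = Dab/A := by
    rw [Complex.div_im, hDdef, hAdef]
    ring
  have hωc : (Complex.exp (Real.pi * I / 3)).re = 1/2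
      ∧ (Complex.exp (Real.pi * I / 3)).im = Real.sqrt 3 / 2 := by
    have h1 : ((Real.pi : ℂ) * I / 3 : ℂ) = ((Real.pi/3 : ℝ) : ℂ) * I := by push_cast; ring
    rw [h1, Complex.exp_mul_I, ← Complex.ofReal_cos, ← Complex.ofReal_sin,
      Real.cos_pi_div_three, Real.sin_pi_div_three]
    constructor
    · simp only [Complex.add_re, Complex.mul_re, Complex.ofReal_re, Complex.ofReal_im,
        Complex.I_re, Complex.I_im]
      norm_num
    · simp only [Complex.add_im, Complex.mul_im, Complex.ofReal_re, Complex.ofReal_im,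
        Complex.I_re, Complex.I_im]
      norm_num
  have hτ : ∃ (ε k : ℤ), (ε = 1 ∨ ε = -1)
      ∧ b/a = (ε:ℂ) * Complex.exp (Real.pi * I / 3) + (k:ℂ) := by
    rcases hPcases with hP | hP <;> rcases hDcases with hD | hD
    · refine ⟨1, 0, Or.inl rfl, ?_⟩
      have hre : (b/a).re = (Complex.exp (Real.pi * I / 3)).re := by
        rw [hτre, hP, hωc.1, div_eq_iff hA0.ne']
        try ring
      have him : (b/a).im = (Complex.exp (Real.pi * I / 3)).im := by
        rw [hτim, hD, hωc.2, div_eq_iff hA0.ne']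
        try ring
      rw [Complex.ext hre him]; push_cast; ring
    · refine ⟨-1, 1, Or.inr rfl, ?_⟩
      have hre : (b/a).re = (1 - Complex.exp (Real.pi * I / 3)).re := by
        rw [hτre, hP, Complex.sub_re, Complex.one_re, hωc.1, div_eq_iff hA0.ne']
        try ring
      have him : (b/a).im = (1 - Complex.exp (Real.pi * I / 3)).im := by
        rw [hτim, hD, Complex.sub_im, Complex.one_im, hωc.2, div_eq_iff hA0.ne']
        try ring
      rw [Complex.ext hre him]; push_cast; ring
    · refine ⟨1, -1, Or.inl rfl, ?_⟩
      have hre : (b/a).re = (Complex.exp (Real.pi * I / 3) - 1).re := by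
        rw [hτre, hP, Complex.sub_re, Complex.one_re, hωc.1, div_eq_iff hA0.ne']
        try ring
      have him : (b/a).im = (Complex.exp (Real.pi * I / 3) - 1).im := by
        rw [hτim, hD, Complex.sub_im, Complex.one_im, hωc.2, div_eq_iff hA0.ne']
        try ring
      rw [Complex.ext hre him]; push_cast; ring
    · refine ⟨-1, 0, Or.inr rfl, ?_⟩
      have hre : (b/a).re = (-Complex.exp (Real.pi * I / 3)).re := by
        rw [hτre, hP, Complex.neg_re, hωc.1, div_eq_iff hA0.ne']
        try ring
      have him : (b/a).im = (-Complex.exp (Real.pi * I / 3)).im := by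
        rw [hτim, hD, Complex.neg_im, hωc.2, div_eq_iff hA0.ne']
        try ring
      rw [Complex.ext hre him]; push_cast; ring
  obtain ⟨ε, k, hε, hτeq⟩ := hτ
  have hε2 : (ε:ℂ) * (ε:ℂ) = 1 := by rcases hε with h | h <;> rw [h] <;> norm_num
  refine ⟨a⁻¹, inv_ne_zero ha0', ?_⟩
  ext x
  simp only [Set.mem_setOf_eq]
  constructor
  · rintro ⟨m, n, rfl⟩
    obtain ⟨m', n', hmn⟩ := hgen ((m:ℂ)*v + (n:ℂ)*w) ⟨m, n, rfl⟩
    refine ⟨m' + n' * k, n' * ε, ?_⟩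
    rw [hmn]
    have h1 : a⁻¹ * ((m':ℂ)*a + (n':ℂ)*b) = (m':ℂ) + (n':ℂ) * (b/a) := by
      field_simp
      try ring
    rw [h1, hτeq]
    push_cast; ring
  · rintro ⟨m, n, rfl⟩
    have hω_ab : Complex.exp (Real.pi * I / 3) = (ε:ℂ) * (b/a) - (ε:ℂ)*(k:ℂ) := by
      have hring : (ε:ℂ)*((ε:ℂ)*Complex.exp (Real.pi * I / 3) + (k:ℂ)) - (ε:ℂ)*(k:ℂ)
          = ((ε:ℂ)*(ε:ℂ))*Complex.exp (Real.pi * I / 3) := by ring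
      rw [hτeq, hring, hε2, one_mul]
    obtain ⟨Mv, Nv, hMN⟩ := hcomb (m - n*ε*k) (n*ε) a b (⟨p, q, hab1⟩ : a ∈ L) ⟨r, s0, hab2⟩
    refine ⟨Mv, Nv, ?_⟩
    rw [← hMN, hω_ab]
    field_simp
    push_cast
    ring
end

section
/- For every full-rank lattice L in Euclidean space R^b, λ₁(L) ≤ √γ_b · covol(L)^{1/b} where γ₂ = 2/√3; in particular for b = 2, the hexagonal lattice spanned by 1 and e^{2πi/3} (after scaling to unit covolume) attains λ₁(L)² / covol(L) = 2/√3, so the supremum defining γ₂ is attained. -/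
/-- Covolume of the lattice spanned by `v` (absolute determinant of the basis). -/
noncomputable def latticeCovol {b : ℕ} (v : Fin b → EuclideanSpace ℝ (Fin b)) : ℝ :=
  |(Matrix.of fun i j => v i j).det|

/-- First successive minimum: least norm of a nonzero vector of the lattice spanned by `v`. -/
noncomputable def latticeLambda1 {b : ℕ} (v : Fin b → EuclideanSpace ℝ (Fin b)) : ℝ :=
  sInf {r : ℝ | ∃ m : Fin b → ℤ,
    (∑ i, (m i : ℝ) • v i) ≠ 0 ∧ ‖∑ i, (m i : ℝ) • v i‖ = r}

/-- The Hermite constant `γ_b`, as the supremum of `λ₁(L)²/covol(L)^{2/b}` over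
full-rank lattices `L ⊂ ℝ^b`. -/
noncomputable def hermiteConstant (b : ℕ) : ℝ :=
  sSup {r : ℝ | ∃ v : Fin b → EuclideanSpace ℝ (Fin b), LinearIndependent ℝ v ∧
    r = latticeLambda1 v ^ 2 / latticeCovol v ^ ((2 : ℝ) / b)}


def lamSet {b : ℕ} (v : Fin b → EuclideanSpace ℝ (Fin b)) : Set ℝ :=
  {r : ℝ | ∃ m : Fin b → ℤ,
    (∑ i, (m i : ℝ) • v i) ≠ 0 ∧ ‖∑ i, (m i : ℝ) • v i‖ = r}

lemma lambda1_eq {b : ℕ} (v : Fin b → EuclideanSpace ℝ (Fin b)) :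
    latticeLambda1 v = sInf (lamSet v) := rfl

lemma lamSet_bddBelow {b : ℕ} (v : Fin b → EuclideanSpace ℝ (Fin b)) :
    BddBelow (lamSet v) :=
  ⟨0, fun _ ⟨_, _, hm⟩ => hm ▸ norm_nonneg _⟩

lemma lambda1_nonneg {b : ℕ} (v : Fin b → EuclideanSpace ℝ (Fin b)) :
    0 ≤ latticeLambda1 v :=
  Real.sInf_nonneg fun _ ⟨_, _, hm⟩ => hm ▸ norm_nonneg _

lemma lambda1_le {b : ℕ} (v : Fin b → EuclideanSpace ℝ (Fin b)) (m : Fin b → ℤ)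
    (hm : (∑ i, (m i : ℝ) • v i) ≠ 0) :
    latticeLambda1 v ≤ ‖∑ i, (m i : ℝ) • v i‖ :=
  csInf_le (lamSet_bddBelow v) ⟨m, hm, rfl⟩

lemma det_ne_zero_of_li {b : ℕ} {v : Fin b → EuclideanSpace ℝ (Fin b)}
    (hv : LinearIndependent ℝ v) : (Matrix.of fun i j => v i j).det ≠ 0 := by
  have h : LinearIndependent ℝ (fun i => (Matrix.of fun i j => v i j) i) := by
    have := hv.map' (WithLp.linearEquiv 2 ℝ (Fin b → ℝ)).toLinearMap
      (LinearEquiv.ker _)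
    exact this
  exact ((Matrix.isUnit_iff_isUnit_det _).1
    (Matrix.linearIndependent_rows_iff_isUnit.1 h)).ne_zero

lemma covol_pos {b : ℕ} {v : Fin b → EuclideanSpace ℝ (Fin b)}
    (hv : LinearIndependent ℝ v) : 0 < latticeCovol v :=
  abs_pos.2 (det_ne_zero_of_li hv)


open Finset in
lemma exists_lambda1_min {b : ℕ} (hb : 0 < b) (v : Fin b → EuclideanSpace ℝ (Fin b))
    (hv : LinearIndependent ℝ v) :
    ∃ m : Fin b → ℤ, (∑ i, (m i : ℝ) • v i) ≠ 0 ∧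
      ‖∑ i, (m i : ℝ) • v i‖ = latticeLambda1 v := by
  show ∃ m : Fin b → ℤ, (∑ i, (m i : ℝ) • v i) ≠ 0 ∧
      ‖∑ i, (m i : ℝ) • v i‖ = sInf {r : ℝ | ∃ m : Fin b → ℤ,
        (∑ i, (m i : ℝ) • v i) ≠ 0 ∧ ‖∑ i, (m i : ℝ) • v i‖ = r}
  classical
  set S := {r : ℝ | ∃ m : Fin b → ℤ,
        (∑ i, (m i : ℝ) • v i) ≠ 0 ∧ ‖∑ i, (m i : ℝ) • v i‖ = r} with hS
  set i0 : Fin b := ⟨0, hb⟩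
  haveI : Nonempty (Fin b) := ⟨i0⟩
  have hcard : Fintype.card (Fin b) = Module.finrank ℝ (EuclideanSpace ℝ (Fin b)) := by
    simp [finrank_euclideanSpace_fin]
  set B := basisOfLinearIndependentOfCardEqFinrank hv hcard with hBdef
  have hB : ⇑B = v := coe_basisOfLinearIndependentOfCardEqFinrank hv hcard
  set g : EuclideanSpace ℝ (Fin b) →L[ℝ] (Fin b → ℝ) :=
    LinearMap.toContinuousLinearMap (B.equivFun : _ ≃ₗ[ℝ] _).toLinearMap with hg
  have key : ∀ m : Fin b → ℤ, ∀ i, |(m i : ℝ)| ≤ ‖g‖ * ‖∑ j, (m j : ℝ) • v j‖ := by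
    intro m i
    have hx : B.equivFun (∑ j, (m j : ℝ) • v j) = fun j => (m j : ℝ) := by
      have : (∑ j, (m j : ℝ) • v j) = B.equivFun.symm (fun j => (m j : ℝ)) := by
        rw [Module.Basis.equivFun_symm_apply]
        simp [hB]
      rw [this, LinearEquiv.apply_symm_apply]
    have h2 : g (∑ j, (m j : ℝ) • v j) = fun j => (m j : ℝ) := hx
    have h1 : |(m i : ℝ)| ≤ ‖g (∑ j, (m j : ℝ) • v j)‖ := by
      rw [h2]
      simpa [Real.norm_eq_abs] using norm_le_pi_norm (f := fun j : Fin b => (m j : ℝ)) i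
    exact h1.trans (g.le_opNorm _)
  have hsum0 : (∑ i, ((Pi.single i0 (1:ℤ) : Fin b → ℤ) i : ℝ) • v i) = v i0 := by
    rw [Finset.sum_eq_single i0]
    · simp
    · intro j _ hj; simp [Pi.single_eq_of_ne hj]
    · simp
  have hv0 : v i0 ≠ 0 := hv.ne_zero i0
  set R := ‖v i0‖ with hR
  set K : ℤ := ⌈‖g‖ * R⌉ with hK
  set T : Finset (Fin b → ℤ) := Fintype.piFinset fun _ => Finset.Icc (-K) K with hT
  set T' : Finset (Fin b → ℤ) := T.filter
    (fun m => (∑ i, (m i : ℝ) • v i) ≠ 0 ∧ ‖∑ i, (m i : ℝ) • v i‖ ≤ R) with hT'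
  have memT : ∀ m : Fin b → ℤ, (∑ i, (m i : ℝ) • v i) ≠ 0 →
      ‖∑ i, (m i : ℝ) • v i‖ ≤ R → m ∈ T' := by
    intro m h1 h2
    rw [hT', Finset.mem_filter]
    refine ⟨?_, h1, h2⟩
    rw [hT, Fintype.mem_piFinset]
    intro i
    rw [Finset.mem_Icc, ← abs_le]
    have h4 := (key m i).trans (mul_le_mul_of_nonneg_left h2 (norm_nonneg g))
    have h3 : ((|m i| : ℤ) : ℝ) ≤ (K : ℝ) := by
      rw [Int.cast_abs]
      exact h4.trans (Int.le_ceil _)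
    exact_mod_cast h3
  have hm0T' : (Pi.single i0 (1:ℤ)) ∈ T' := by
    apply memT
    · rw [hsum0]; exact hv0
    · rw [hsum0]
  have hne : T'.Nonempty := ⟨_, hm0T'⟩
  obtain ⟨m', hm'T', hm'⟩ := Finset.exists_min_image T' (fun m => ‖∑ i, (m i : ℝ) • v i‖) hne
  rw [hT', Finset.mem_filter] at hm'T'
  obtain ⟨_, hm'0, hm'R⟩ := hm'T'
  refine ⟨m', hm'0, ?_⟩
  have hleast : IsLeast S ‖∑ i, (m' i : ℝ) • v i‖ := by
    constructor
    · exact ⟨m', hm'0, rfl⟩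
    · rintro r ⟨m, hm1, rfl⟩
      by_cases hc : ‖∑ i, (m i : ℝ) • v i‖ ≤ R
      · exact hm' m (memT m hm1 hc)
      · push_neg at hc
        calc ‖∑ i, (m' i : ℝ) • v i‖ ≤ R := hm'R
        _ ≤ _ := hc.le
  exact (hleast.csInf_eq).symm

open MeasureTheory Submodule in
open MeasureTheory Submodule in
lemma lambda1_le_cube {b : ℕ} (hb : 0 < b) (v : Fin b → EuclideanSpace ℝ (Fin b))
    (hv : LinearIndependent ℝ v) (a : ℝ) (ha : 0 < a)
    (hcov : |(Matrix.of fun i j => v i j).det| < a ^ b) :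
    ∃ m : Fin b → ℤ, (∑ i, (m i : ℝ) • v i) ≠ 0 ∧
      ‖∑ i, (m i : ℝ) • v i‖ ≤ Real.sqrt b * a := by
  classical
  haveI : Nonempty (Fin b) := ⟨⟨0, hb⟩⟩
  have hcard : Fintype.card (Fin b) = Module.finrank ℝ (EuclideanSpace ℝ (Fin b)) := by
    simp [finrank_euclideanSpace_fin]
  set B := basisOfLinearIndependentOfCardEqFinrank hv hcard with hBdef
  have hB : ⇑B = v := coe_basisOfLinearIndependentOfCardEqFinrank hv hcard
  set L : AddSubgroup (EuclideanSpace ℝ (Fin b)) := (span ℤ (Set.range v)).toAddSubgroup with hL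
  haveI : Countable L := by
    rw [hL]
    exact inferInstanceAs (Countable (span ℤ (Set.range v)))
  have fund : IsAddFundamentalDomain L (ZSpan.fundamentalDomain B) := by
    rw [hL, ← hB]
    exact ZSpan.isAddFundamentalDomain' B volume
  -- volume of fundamental domain
  set b₀ := (EuclideanSpace.basisFun (Fin b) ℝ).toBasis with hb₀
  have hvolF : volume (ZSpan.fundamentalDomain B) =
      ENNReal.ofReal |(Matrix.of fun i j => v i j).det| := by
    rw [ZSpan.measure_fundamentalDomain B volume b₀]
    have h1 : volume (ZSpan.fundamentalDomain b₀) = 1 := by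
      rw [measure_congr (ZSpan.fundamentalDomain_ae_parallelepiped b₀ volume),
        OrthonormalBasis.coe_toBasis]
      exact (EuclideanSpace.basisFun (Fin b) ℝ).volume_parallelepiped
    rw [h1, mul_one]
    congr 1
    have hM : b₀.toMatrix ⇑B = (Matrix.of fun i j => v i j).transpose := by
      apply Matrix.ext
      intro i j
      simp only [Module.Basis.toMatrix_apply, hB, Matrix.transpose_apply, Matrix.of_apply, hb₀, OrthonormalBasis.coe_toBasis_repr_apply, EuclideanSpace.basisFun_repr]
    rw [Module.Basis.det_apply, hM, Matrix.det_transpose]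
  set s : Set (EuclideanSpace ℝ (Fin b)) := {x | ∀ i, |x i| ≤ a} with hs
  have h_symm : ∀ x ∈ s, -x ∈ s := by
    intro x hx i
    have : (-x) i = -(x i) := rfl
    rw [this, abs_neg]
    exact hx i
  have h_conv : Convex ℝ s := by
    intro x hx y hy p q hp hq hpq
    intro i
    have hpi : (p • x + q • y) i = p * x i + q * y i := rfl
    rw [hpi]
    calc |p * x i + q * y i| ≤ |p * x i| + |q * y i| := abs_add_le _ _
    _ = p * |x i| + q * |y i| := by
        rw [abs_mul, abs_mul, abs_of_nonneg hp, abs_of_nonneg hq]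
    _ ≤ p * a + q * a := by
        gcongr
        exacts [hx i, hy i]
    _ = a := by rw [← add_mul, hpq, one_mul]
  have hs_eq : s = (@WithLp.ofLp 2 (Fin b → ℝ)) ⁻¹'
      (Set.univ.pi fun _ => Set.Icc (-a) a) := by
    ext x
    simp only [hs, Set.mem_setOf_eq, Set.mem_preimage, Set.mem_pi, Set.mem_univ,
      forall_true_left]
    constructor
    · intro hx i
      exact Set.mem_Icc.2 (abs_le.1 (hx i))
    · intro hx i
      exact abs_le.2 (Set.mem_Icc.1 (hx i))
  have hvols : volume s = ENNReal.ofReal (2 * a) ^ b := by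
    rw [hs_eq, MeasurePreserving.measure_preimage
      (PiLp.volume_preserving_ofLp (Fin b))
      (MeasurableSet.univ_pi fun _ => measurableSet_Icc).nullMeasurableSet]
    rw [volume_pi, Measure.pi_pi]
    have : a - (-a) = 2 * a := by ring
    simp [Real.volume_Icc, this]
  have hlt : volume (ZSpan.fundamentalDomain B) *
      2 ^ Module.finrank ℝ (EuclideanSpace ℝ (Fin b)) < volume s := by
    rw [hvolF, hvols, finrank_euclideanSpace_fin]
    have h2a : ENNReal.ofReal (2 * a) = 2 * ENNReal.ofReal a := by
      rw [ENNReal.ofReal_mul (by norm_num)]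
      norm_num
    rw [h2a, mul_pow, mul_comm ((2:ENNReal) ^ b) (ENNReal.ofReal a ^ b),
      ENNReal.mul_lt_mul_iff_left (pow_ne_zero _ two_ne_zero)
        (ENNReal.pow_ne_top ENNReal.ofNat_ne_top),
      ← ENNReal.ofReal_pow ha.le]
    exact (ENNReal.ofReal_lt_ofReal_iff (by positivity)).2 hcov
  obtain ⟨x, hx0, hxs⟩ :=
    exists_ne_zero_mem_lattice_of_measure_mul_two_pow_lt_measure fund h_symm h_conv hlt
  obtain ⟨m, hm⟩ := (mem_span_range_iff_exists_fun ℤ).1 x.2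
  have hmx : (∑ i, (m i : ℝ) • v i) = (x : EuclideanSpace ℝ (Fin b)) := by
    rw [← hm]
    congr 1
    funext i
    rw [Int.cast_smul_eq_zsmul]
  refine ⟨m, ?_, ?_⟩
  · rw [hmx]
    intro h
    exact hx0 (Subtype.ext h)
  · rw [hmx, EuclideanSpace.norm_eq]
    have hterm : ∀ i : Fin b, ‖(x : EuclideanSpace ℝ (Fin b)) i‖ ^ 2 ≤ a ^ 2 := by
      intro i
      rw [Real.norm_eq_abs]
      exact pow_le_pow_left₀ (abs_nonneg _) (hxs i) 2
    have hsum : ∑ i, ‖(x : EuclideanSpace ℝ (Fin b)) i‖ ^ 2 ≤ (b : ℝ) * a ^ 2 := by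
      calc ∑ i, ‖(x : EuclideanSpace ℝ (Fin b)) i‖ ^ 2
          ≤ ∑ _i : Fin b, a ^ 2 := Finset.sum_le_sum fun i _ => hterm i
        _ = (b : ℝ) * a ^ 2 := by
            rw [Finset.sum_const, Finset.card_univ, Fintype.card_fin, nsmul_eq_mul]
    calc Real.sqrt (∑ i, ‖(x : EuclideanSpace ℝ (Fin b)) i‖ ^ 2)
        ≤ Real.sqrt ((b : ℝ) * a ^ 2) := Real.sqrt_le_sqrt hsum
      _ = Real.sqrt b * a := by
          rw [Real.sqrt_mul (by positivity), Real.sqrt_sq ha.le]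

lemma coord_sum {v : Fin 2 → EuclideanSpace ℝ (Fin 2)} (m : Fin 2 → ℤ) (j : Fin 2) :
    (∑ i, (m i : ℝ) • v i) j = (m 0 : ℝ) * v 0 j + (m 1 : ℝ) * v 1 j := by
  simp [Fin.sum_univ_two, Finset.sum_apply, PiLp.smul_apply]

lemma norm_sq_coord (x : EuclideanSpace ℝ (Fin 2)) : ‖x‖ ^ 2 = x 0 ^ 2 + x 1 ^ 2 := by
  rw [EuclideanSpace.norm_eq, Real.sq_sqrt (by positivity)]
  simp [Fin.sum_univ_two]

lemma inner_coord (x y : EuclideanSpace ℝ (Fin 2)) :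
    (inner ℝ x y : ℝ) = x 0 * y 0 + x 1 * y 1 := by
  simp [PiLp.inner_apply, Fin.sum_univ_two, RCLike.inner_apply]
  ring

lemma lambda1_sq_le {v : Fin 2 → EuclideanSpace ℝ (Fin 2)} (hv : LinearIndependent ℝ v) :
    latticeLambda1 v ^ 2 ≤ 2 / Real.sqrt 3 * latticeCovol v := by
  classical
  obtain ⟨p, hp0, hpl⟩ := exists_lambda1_min two_pos v hv
  set lam := latticeLambda1 v with hlam
  set u := ∑ i, (p i : ℝ) • v i with hu
  have hlpos : 0 < lam := by
    rw [← hpl]; exact norm_pos_iff.2 hp0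
  have hpne : ¬(p 0 = 0 ∧ p 1 = 0) := by
    rintro ⟨h0, h1⟩
    apply hp0
    have : p = 0 := by
      funext i
      fin_cases i <;> assumption
    rw [hu, this]
    simp
  -- gcd of p is 1
  have hgcd : Int.gcd (p 0) (p 1) = 1 := by
    set g := Int.gcd (p 0) (p 1) with hgdef
    have hgpos : 0 < g := by
      rcases Nat.eq_zero_or_pos g with h | h
      · exact absurd (Int.gcd_eq_zero_iff.1 h) hpne
      · exact h
    by_contra hne
    have hg2 : 2 ≤ g := by omega
    have hdvd0 : (g : ℤ) ∣ p 0 := Int.gcd_dvd_left _ _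
    have hdvd1 : (g : ℤ) ∣ p 1 := Int.gcd_dvd_right _ _
    set q : Fin 2 → ℤ := ![p 0 / g, p 1 / g] with hq
    have hpq : ∀ i, p i = g * q i := by
      intro i
      fin_cases i
      · simpa [hq] using (Int.ediv_mul_cancel hdvd0).symm.trans (mul_comm _ _)
      · simpa [hq] using (Int.ediv_mul_cancel hdvd1).symm.trans (mul_comm _ _)
    have hsum : u = (g : ℝ) • ∑ i, (q i : ℝ) • v i := by
      rw [hu, Finset.smul_sum]
      apply Finset.sum_congr rfl
      intro i _
      rw [smul_smul, ← Int.cast_natCast (R := ℝ), ← Int.cast_mul, ← hpq i]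
    have hqne : (∑ i, (q i : ℝ) • v i) ≠ 0 := by
      intro h
      apply hp0
      rw [hsum, h, smul_zero]
    have hle := lambda1_le v q hqne
    have hnorm : ‖u‖ = (g : ℝ) * ‖∑ i, (q i : ℝ) • v i‖ := by
      rw [hsum, norm_smul, Real.norm_natCast]
    rw [← hlam] at hle
    have hg1 : (1 : ℝ) < (g : ℝ) := by exact_mod_cast hg2
    nlinarith [hpl, hnorm, hle, hlpos]
  -- Bezout
  have hbez : p 0 * Int.gcdA (p 0) (p 1) + p 1 * Int.gcdB (p 0) (p 1) = 1 := by
    have := Int.gcd_eq_gcd_ab (p 0) (p 1)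
    rw [hgcd] at this
    exact_mod_cast this.symm
  set q : Fin 2 → ℤ := ![-Int.gcdB (p 0) (p 1), Int.gcdA (p 0) (p 1)] with hq
  set w := ∑ i, (q i : ℝ) • v i with hw
  set k : ℤ := round ((inner ℝ u w : ℝ) / lam ^ 2) with hk
  set r : Fin 2 → ℤ := fun i => q i - k * p i with hr
  set w' := ∑ i, (r i : ℝ) • v i with hw'
  have hdetpr : p 0 * r 1 - p 1 * r 0 = 1 := by
    simp only [hr, hq]
    simp [Matrix.cons_val_zero, Matrix.cons_val_one]
    ring_nf
    linarith [hbez]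
  have hw'0 : w' ≠ 0 := by
    intro h
    rw [hw'] at h
    have := Fintype.linearIndependent_iff.1 hv (fun i => (r i : ℝ)) h
    have h0 : (r 0 : ℝ) = 0 := this 0
    have h1 : (r 1 : ℝ) = 0 := this 1
    have hr0 : r 0 = 0 := by exact_mod_cast h0
    have hr1 : r 1 = 0 := by exact_mod_cast h1
    rw [hr0, hr1] at hdetpr
    simp at hdetpr
  have hw'lam : lam ≤ ‖w'‖ := by
    rw [hlam]
    exact lambda1_le v r hw'0
  -- w' = w - k • u
  have hw'eq : w' = w - (k : ℝ) • u := by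
    rw [hw', hw, hu, Finset.smul_sum]
    rw [← Finset.sum_sub_distrib]
    apply Finset.sum_congr rfl
    intro i _
    rw [smul_smul, ← sub_smul, hr]
    push_cast
    ring_nf
  set T : ℝ := (inner ℝ u w' : ℝ) with hT
  have hTval : T = (inner ℝ u w : ℝ) - (k : ℝ) * lam ^ 2 := by
    rw [hT, hw'eq, inner_sub_right, real_inner_smul_right, real_inner_self_eq_norm_sq,
      hpl, hlam]
  have hTbound : |T| ≤ lam ^ 2 / 2 := by
    have h1 : T = ((inner ℝ u w : ℝ) / lam ^ 2 - k) * lam ^ 2 := by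
      rw [hTval]
      field_simp
    rw [h1, abs_mul, abs_of_pos (by positivity : (0:ℝ) < lam ^ 2)]
    have h2 := abs_sub_round ((inner ℝ u w : ℝ) / lam ^ 2)
    nlinarith [sq_nonneg lam]
  -- determinant identities
  set D : ℝ := (Matrix.of fun i j => v i j).det with hD
  have hDval : D = v 0 0 * v 1 1 - v 0 1 * v 1 0 := by
    rw [hD, Matrix.det_fin_two]
    simp
  have hdetprR : (p 0 : ℝ) * (r 1 : ℝ) - (p 1 : ℝ) * (r 0 : ℝ) = 1 := by
    exact_mod_cast hdetpr
  have key1 : u 0 * w' 1 - u 1 * w' 0 = D := by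
    rw [hu, hw', coord_sum, coord_sum, coord_sum, coord_sum, hDval]
    linear_combination (v 0 0 * v 1 1 - v 0 1 * v 1 0) * hdetprR
  have key2 : D ^ 2 = lam ^ 2 * ‖w'‖ ^ 2 - T ^ 2 := by
    have h1 : lam ^ 2 = u 0 ^ 2 + u 1 ^ 2 := by rw [← hpl, norm_sq_coord]
    have h2 : ‖w'‖ ^ 2 = w' 0 ^ 2 + w' 1 ^ 2 := norm_sq_coord w'
    have h3 : T = u 0 * w' 0 + u 1 * w' 1 := by rw [hT, inner_coord]
    rw [← key1, h1, h2, h3]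
    ring
  -- conclude
  have hW : lam ^ 2 ≤ ‖w'‖ ^ 2 := pow_le_pow_left₀ hlpos.le hw'lam 2
  have hT2 : T ^ 2 ≤ (lam ^ 2 / 2) ^ 2 := by
    rw [← sq_abs]
    exact pow_le_pow_left₀ (abs_nonneg T) hTbound 2
  have h5' : lam ^ 2 * lam ^ 2 ≤ lam ^ 2 * ‖w'‖ ^ 2 :=
    mul_le_mul_of_nonneg_left hW (sq_nonneg lam)
  have hl4 : lam ^ 4 = lam ^ 2 * lam ^ 2 := by ring
  have hT2' : T ^ 2 ≤ lam ^ 2 * lam ^ 2 / 4 := by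
    have : (lam ^ 2 / 2) ^ 2 = lam ^ 2 * lam ^ 2 / 4 := by ring
    linarith [hT2]
  have h4 : 3 * lam ^ 4 ≤ 4 * D ^ 2 := by linarith [key2, h5', hT2', hl4]
  clear_value lam T D
  clear key1 key2 hw'eq hTval hT hw' hw hu hk hq hr hdetpr hdetprR hDval hTbound hw'lam hw'0 hp0 hpl
  have hs3 : (0:ℝ) < Real.sqrt 3 := by positivity
  have hs3sq : Real.sqrt 3 ^ 2 = 3 := Real.sq_sqrt (by norm_num)
  have hdd : D ^ 2 = |D| ^ 2 := (sq_abs D).symm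
  have h6 : 0 < Real.sqrt 3 * lam ^ 2 + 2 * |D| := by positivity
  have h5 : Real.sqrt 3 * lam ^ 2 ≤ 2 * |D| := by
    have h7 : (Real.sqrt 3 * lam ^ 2) ^ 2 ≤ (2 * |D|) ^ 2 := by
      have e1 : (Real.sqrt 3 * lam ^ 2) ^ 2 = 3 * lam ^ 4 := by
        rw [mul_pow, hs3sq]; ring
      have e2 : (2 * |D|) ^ 2 = 4 * D ^ 2 := by
        rw [mul_pow, sq_abs]; ring
      linarith [h4]
    have h8 := Real.sqrt_le_sqrt h7
    rwa [Real.sqrt_sq (by positivity), Real.sqrt_sq (by positivity)] at h8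
  have : latticeCovol v = |D| := by rw [latticeCovol, hD]
  rw [this, div_mul_eq_mul_div, le_div_iff₀ hs3]
  linarith

noncomputable def hexv : Fin 2 → EuclideanSpace ℝ (Fin 2) :=
  ![(WithLp.equiv 2 (Fin 2 → ℝ)).symm ![1, 0],
    (WithLp.equiv 2 (Fin 2 → ℝ)).symm ![-(1 / 2), Real.sqrt 3 / 2]]

lemma hexv00 : hexv 0 0 = 1 := rfl
lemma hexv01 : hexv 0 1 = 0 := rfl
lemma hexv10 : hexv 1 0 = -(1/2) := rfl
lemma hexv11 : hexv 1 1 = Real.sqrt 3 / 2 := rfl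

lemma hex_li : LinearIndependent ℝ hexv := by
  rw [linearIndependent_fin2]
  constructor
  · intro h
    have h1 : hexv 1 1 = 0 := by rw [h]; rfl
    rw [hexv11] at h1
    have hs : (0:ℝ) < Real.sqrt 3 := by positivity
    linarith
  · intro a h
    have h1 : (a • hexv 1) 1 = hexv 0 1 := by rw [h]
    have h0 : (a • hexv 1) 0 = hexv 0 0 := by rw [h]
    have e1 : a * (Real.sqrt 3 / 2) = 0 := by
      rw [← hexv11, ← hexv01]; exact h1
    have e0 : a * (-(1/2)) = 1 := by
      rw [← hexv10, ← hexv00]; exact h0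
    have hs : (0:ℝ) < Real.sqrt 3 := by positivity
    have ha : a = 0 := by
      rcases mul_eq_zero.1 e1 with h | h
      · exact h
      · nlinarith
    rw [ha] at e0
    norm_num at e0

lemma hex_covol : latticeCovol hexv = Real.sqrt 3 / 2 := by
  rw [latticeCovol, Matrix.det_fin_two]
  have e : ∀ i j, (Matrix.of fun i j => hexv i j) i j = hexv i j := fun _ _ => rfl
  rw [e, e, e, e, hexv00, hexv01, hexv10, hexv11]
  have he : (1:ℝ) * (Real.sqrt 3 / 2) - 0 * (-(1/2)) = Real.sqrt 3 / 2 := by ring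
  rw [he, abs_of_nonneg (by positivity)]

lemma hex_norm_sq (m : Fin 2 → ℤ) :
    ‖∑ i, (m i : ℝ) • hexv i‖ ^ 2 = ((m 0 ^ 2 - m 0 * m 1 + m 1 ^ 2 : ℤ) : ℝ) := by
  rw [norm_sq_coord, coord_sum, coord_sum, hexv00, hexv01, hexv10, hexv11]
  have hs3sq : Real.sqrt 3 ^ 2 = 3 := Real.sq_sqrt (by norm_num)
  push_cast
  linear_combination ((m 1 : ℝ)) ^ 2 / 4 * hs3sq

lemma hex_lambda1 : latticeLambda1 hexv = 1 := by
  have hmem : (1 : ℝ) ∈ {r : ℝ | ∃ m : Fin 2 → ℤ,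
      (∑ i, (m i : ℝ) • hexv i) ≠ 0 ∧ ‖∑ i, (m i : ℝ) • hexv i‖ = r} := by
    refine ⟨![1, 0], ?_, ?_⟩
    · intro h
      have h0 : (∑ i, ((![1, 0] : Fin 2 → ℤ) i : ℝ) • hexv i) 0 = 0 := by rw [h]; rfl
      rw [coord_sum] at h0
      simp [hexv00, hexv10] at h0
    · have hsq1 : ‖∑ i, ((![1, 0] : Fin 2 → ℤ) i : ℝ) • hexv i‖ ^ 2 = 1 := by
        rw [hex_norm_sq]
        norm_num
      have hn := norm_nonneg (∑ i, ((![1, 0] : Fin 2 → ℤ) i : ℝ) • hexv i)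
      calc ‖∑ i, ((![1, 0] : Fin 2 → ℤ) i : ℝ) • hexv i‖
          = Real.sqrt (‖∑ i, ((![1, 0] : Fin 2 → ℤ) i : ℝ) • hexv i‖ ^ 2) :=
            (Real.sqrt_sq hn).symm
        _ = 1 := by rw [hsq1, Real.sqrt_one]
  have hlb : ∀ r ∈ {r : ℝ | ∃ m : Fin 2 → ℤ,
      (∑ i, (m i : ℝ) • hexv i) ≠ 0 ∧ ‖∑ i, (m i : ℝ) • hexv i‖ = r}, (1:ℝ) ≤ r := by
    rintro r ⟨m, hm0, rfl⟩
    have hmne : ¬(m 0 = 0 ∧ m 1 = 0) := by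
      rintro ⟨h0, h1⟩
      apply hm0
      have : m = ![0, 0] := by
        funext i; fin_cases i <;> simp [h0, h1]
      rw [this]
      simp
    have hQ : 1 ≤ m 0 ^ 2 - m 0 * m 1 + m 1 ^ 2 := by
      rcases eq_or_ne (m 1) 0 with h1 | h1
      · have h0 : m 0 ≠ 0 := fun h => hmne ⟨h, h1⟩
        rw [h1]
        nlinarith [Int.one_le_abs h0, sq_abs (m 0)]
      · have h4 : 3 ≤ 4 * (m 0 ^ 2 - m 0 * m 1 + m 1 ^ 2) := by
          nlinarith [Int.one_le_abs h1, sq_abs (m 1), sq_nonneg (2 * m 0 - m 1)]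
        set n := m 0 ^ 2 - m 0 * m 1 + m 1 ^ 2 with hn
        clear_value n
        omega
    have hsq := hex_norm_sq m
    have hQR : (1 : ℝ) ≤ ((m 0 ^ 2 - m 0 * m 1 + m 1 ^ 2 : ℤ) : ℝ) := by exact_mod_cast hQ
    have hn := norm_nonneg (∑ i, (m i : ℝ) • hexv i)
    nlinarith [hsq, hQR, hn, sq_nonneg (‖∑ i, (m i : ℝ) • hexv i‖ - 1)]
  exact le_antisymm (csInf_le ⟨0, fun r ⟨m, _, hm⟩ => hm ▸ norm_nonneg _⟩ hmem)
    (le_csInf ⟨1, hmem⟩ hlb)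

lemma covol_rpow_sq {b : ℕ} (hb : 0 < b) {v : Fin b → EuclideanSpace ℝ (Fin b)}
    (hv : LinearIndependent ℝ v) :
    latticeCovol v ^ ((2 : ℝ) / b) = (latticeCovol v ^ ((1 : ℝ) / b)) ^ 2 := by
  rw [← Real.rpow_natCast (latticeCovol v ^ ((1:ℝ)/b)) 2, ← Real.rpow_mul (covol_pos hv).le]
  norm_num
  rw [mul_comm]
  rfl

lemma lambda1_le_sqrt_covol {b : ℕ} (hb : 0 < b) (v : Fin b → EuclideanSpace ℝ (Fin b))
    (hv : LinearIndependent ℝ v) :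
    latticeLambda1 v ≤ Real.sqrt b * latticeCovol v ^ ((1 : ℝ) / b) := by
  have hcov : 0 < latticeCovol v := covol_pos hv
  set c := latticeCovol v ^ ((1:ℝ)/b) with hc
  have hcpos : 0 < c := Real.rpow_pos_of_pos hcov _
  have hbne : (b : ℝ) ≠ 0 := by exact_mod_cast hb.ne'
  have hcb : c ^ b = latticeCovol v := by
    rw [hc, ← Real.rpow_natCast (latticeCovol v ^ ((1:ℝ)/b)) b, ← Real.rpow_mul hcov.le,
      one_div, inv_mul_cancel₀ hbne, Real.rpow_one]
  have hsqb : 0 < Real.sqrt b := Real.sqrt_pos.2 (by exact_mod_cast hb)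
  refine le_of_forall_pos_le_add ?_
  intro ε hε
  set a := c + ε / Real.sqrt b with ha
  have hapos : 0 < a := by positivity
  have hlt : |(Matrix.of fun i j => v i j).det| < a ^ b := by
    have h1 : latticeCovol v < a ^ b := by
      rw [← hcb]
      exact pow_lt_pow_left₀ (by rw [ha]; linarith [div_pos hε hsqb]) hcpos.le hb.ne'
    exact h1
  obtain ⟨m, hm0, hmle⟩ := lambda1_le_cube hb v hv a hapos hlt
  have h2 := (lambda1_le v m hm0).trans hmle
  have h3 : Real.sqrt b * a = Real.sqrt b * c + ε := by
    rw [ha, mul_add, mul_div_cancel₀ _ hsqb.ne']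
  linarith

lemma hermite_bddAbove {b : ℕ} (hb : 0 < b) :
    BddAbove {r : ℝ | ∃ v : Fin b → EuclideanSpace ℝ (Fin b), LinearIndependent ℝ v ∧
      r = latticeLambda1 v ^ 2 / latticeCovol v ^ ((2 : ℝ) / b)} := by
  refine ⟨(b : ℝ), ?_⟩
  rintro r ⟨v, hv, rfl⟩
  have hcov := covol_pos hv
  have hc2 : 0 < latticeCovol v ^ ((2:ℝ)/b) := Real.rpow_pos_of_pos hcov _
  rw [div_le_iff₀ hc2, covol_rpow_sq hb hv]
  have hle := lambda1_le_sqrt_covol hb v hv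
  have h1 : latticeLambda1 v ^ 2 ≤ (Real.sqrt b * latticeCovol v ^ ((1:ℝ)/b)) ^ 2 :=
    pow_le_pow_left₀ (lambda1_nonneg v) hle 2
  have h2 : (Real.sqrt b * latticeCovol v ^ ((1:ℝ)/b)) ^ 2
      = (b:ℝ) * (latticeCovol v ^ ((1:ℝ)/b)) ^ 2 := by
    rw [mul_pow, Real.sq_sqrt (Nat.cast_nonneg b)]
  linarith

lemma part1 {b : ℕ} (hb : 1 ≤ b) (v : Fin b → EuclideanSpace ℝ (Fin b))
    (hv : LinearIndependent ℝ v) :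
    latticeLambda1 v ≤ Real.sqrt (hermiteConstant b) * latticeCovol v ^ ((1 : ℝ) / b) := by
  have hb0 : 0 < b := hb
  have hcov := covol_pos hv
  have hc2 : 0 < latticeCovol v ^ ((2:ℝ)/b) := Real.rpow_pos_of_pos hcov _
  have hle : latticeLambda1 v ^ 2 / latticeCovol v ^ ((2:ℝ)/b) ≤ hermiteConstant b :=
    le_csSup (hermite_bddAbove hb0) ⟨v, hv, rfl⟩
  have hg : 0 ≤ hermiteConstant b :=
    le_trans (by positivity) hle
  have h1 : latticeLambda1 v ^ 2 ≤ hermiteConstant b * latticeCovol v ^ ((2:ℝ)/b) :=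
    (div_le_iff₀ hc2).1 hle
  have h2 : latticeLambda1 v = Real.sqrt (latticeLambda1 v ^ 2) :=
    (Real.sqrt_sq (lambda1_nonneg v)).symm
  rw [h2]
  calc Real.sqrt (latticeLambda1 v ^ 2)
      ≤ Real.sqrt (hermiteConstant b * latticeCovol v ^ ((2:ℝ)/b)) := Real.sqrt_le_sqrt h1
    _ = Real.sqrt (hermiteConstant b) * latticeCovol v ^ ((1:ℝ)/b) := by
        rw [Real.sqrt_mul hg, covol_rpow_sq hb0 hv,
          Real.sqrt_sq (Real.rpow_pos_of_pos hcov _).le]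

lemma hex_val : latticeLambda1 hexv ^ 2 / latticeCovol hexv = 2 / Real.sqrt 3 := by
  rw [hex_lambda1, hex_covol, one_pow, one_div_div]

lemma gamma2 : hermiteConstant 2 = 2 / Real.sqrt 3 := by
  have h21 : ((2:ℝ)/((2:ℕ):ℝ)) = 1 := by norm_num
  have hexval : latticeLambda1 hexv ^ 2 / latticeCovol hexv ^ ((2:ℝ)/((2:ℕ):ℝ))
      = 2 / Real.sqrt 3 := by
    rw [h21, Real.rpow_one, hex_val]
  apply le_antisymm
  · refine csSup_le ⟨2 / Real.sqrt 3, hexv, hex_li, hexval.symm⟩ ?_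
    rintro r ⟨v, hv, rfl⟩
    rw [h21, Real.rpow_one, div_le_iff₀ (covol_pos hv)]
    have h3 := lambda1_sq_le hv
    linarith
  · exact le_csSup (hermite_bddAbove two_pos) ⟨hexv, hex_li, hexval.symm⟩


/-- Every full-rank lattice `L ⊂ ℝ^b` satisfies `λ₁(L) ≤ √γ_b · covol(L)^{1/b}`; for
`b = 2` one has `γ₂ = 2/√3`, and the hexagonal lattice spanned by `(1,0)` and
`(-1/2, √3/2)` (i.e. by `1` and `e^{2πi/3}`) attains `λ₁(L)²/covol(L) = 2/√3`. -/
theorem hermite_bound_and_hexagonal_attains :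
    (∀ (b : ℕ), 1 ≤ b → ∀ v : Fin b → EuclideanSpace ℝ (Fin b), LinearIndependent ℝ v →
      latticeLambda1 v ≤ Real.sqrt (hermiteConstant b) * latticeCovol v ^ ((1 : ℝ) / b)) ∧
    hermiteConstant 2 = 2 / Real.sqrt 3 ∧
    ∃ v : Fin 2 → EuclideanSpace ℝ (Fin 2), LinearIndependent ℝ v ∧
      v 0 = (WithLp.equiv 2 (Fin 2 → ℝ)).symm ![1, 0] ∧
      v 1 = (WithLp.equiv 2 (Fin 2 → ℝ)).symm ![-(1 / 2), Real.sqrt 3 / 2] ∧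
      latticeLambda1 v ^ 2 / latticeCovol v = 2 / Real.sqrt 3 := by
  exact ⟨fun b hb v hv => part1 hb v hv, gamma2, hexv, hex_li, rfl, rfl, hex_val⟩
end
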